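/- (Uncoded transmission does not benefit from collective measurement: achievability part) Let γ ∈ [0,1] and n ≥ 1. Set ρ_0 = ρ₊ and ρ_1 = ρ₋, and for each x ∈ {0,1}^n let σ_x(u, v) = ∏_{j=1}^n (N_γ(ρ_{x_j}))(u_j, v_j) and Π_x(u, v) = ∏_{j=1}^n ρ_{x_j}(u_j, v_j), both indexed by {0,1}^n × {0,1}^n. Then (Π_x)_{x ∈ {0,1}^n} is a POVM (each Π_x is positive semidefinite and Σ_x Π_x = I), and 2^{−n} · Σ_{x ∈ {0,1}^n} Re Tr(Π_x σ_x) = ((1 + √(1−γ))/2)^n; i.e., performing the optimal single-use measurement individually on each output achieves average success probability ((1 + √(1−γ))/2)^n. -/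

import Mathlib

open Matrix Complex
open scoped ComplexOrder

/-- Kraus operator `K₀` of the qubit amplitude damping channel. -/
noncomputable def K₀ (γ : ℝ) : Matrix (Fin 2) (Fin 2) ℂ :=
  !![1, 0; 0, (Real.sqrt (1 - γ) : ℂ)]

/-- Kraus operator `K₁` of the qubit amplitude damping channel. -/
noncomputable def K₁ (γ : ℝ) : Matrix (Fin 2) (Fin 2) ℂ :=
  !![0, (Real.sqrt γ : ℂ); 0, 0]

/-- The qubit amplitude damping channel with damping parameter `γ`. -/
noncomputable def ADC (γ : ℝ) (ρ : Matrix (Fin 2) (Fin 2) ℂ) : Matrix (Fin 2) (Fin 2) ℂ :=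
  K₀ γ * ρ * (K₀ γ)ᴴ + K₁ γ * ρ * (K₁ γ)ᴴ

/-- The state `ρ₊ = |+⟩⟨+|`. -/
noncomputable def ρPlus : Matrix (Fin 2) (Fin 2) ℂ := (1/2 : ℂ) • !![1, 1; 1, 1]

/-- The state `ρ₋ = |−⟩⟨−|`. -/
noncomputable def ρMinus : Matrix (Fin 2) (Fin 2) ℂ := (1/2 : ℂ) • !![1, -1; -1, 1]

/-- The encoding `0 ↦ ρ₊`, `1 ↦ ρ₋`. -/
noncomputable def ρbit (i : Fin 2) : Matrix (Fin 2) (Fin 2) ℂ :=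
  if i = 0 then ρPlus else ρMinus

/-- The tensor-product channel output `N_γ(ρ_{x₁}) ⊗ ⋯ ⊗ N_γ(ρ_{xₙ})` for the uncoded word
`x ∈ {0,1}ⁿ`, realized as a matrix indexed by `{0,1}ⁿ` with entrywise products. -/
noncomputable def σout (γ : ℝ) (n : ℕ) (x : Fin n → Fin 2) :
    Matrix (Fin n → Fin 2) (Fin n → Fin 2) ℂ :=
  Matrix.of fun u v => ∏ j, (ADC γ (ρbit (x j))) (u j) (v j)

/-- The tensor-product measurement operator `ρ_{x₁} ⊗ ⋯ ⊗ ρ_{xₙ}` (individual optimal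
single-use measurements). -/
noncomputable def Pind (n : ℕ) (x : Fin n → Fin 2) :
    Matrix (Fin n → Fin 2) (Fin n → Fin 2) ℂ :=
  Matrix.of fun u v => ∏ j, (ρbit (x j)) (u j) (v j)

noncomputable def cvec (i a : Fin 2) : ℂ :=
  if i = 0 then ((Real.sqrt 2)⁻¹ : ℂ) else
    if a = 0 then ((Real.sqrt 2)⁻¹ : ℂ) else -((Real.sqrt 2)⁻¹ : ℂ)

lemma cvec_real (i a : Fin 2) : starRingEnd ℂ (cvec i a) = cvec i a := by
  fin_cases i <;> fin_cases a <;> simp [cvec]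

lemma ρbit_factor (i a b : Fin 2) : ρbit i a b = cvec i a * cvec i b := by
  have h : ((Real.sqrt 2 : ℂ))⁻¹ * ((Real.sqrt 2 : ℂ))⁻¹ = (1/2 : ℂ) := by
    rw [← mul_inv, ← Complex.ofReal_mul, Real.mul_self_sqrt (by norm_num)]; norm_num
  fin_cases i <;> fin_cases a <;> fin_cases b <;>
    simp [ρbit, ρPlus, ρMinus, cvec] <;> linear_combination -h

lemma sum_prod_pi {n : ℕ} (f : Fin n → Fin 2 → ℂ) :
    ∑ v : Fin n → Fin 2, ∏ j, f j (v j) = ∏ j, ∑ b, f j b := by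
  rw [Finset.prod_univ_sum]
  rw [Fintype.piFinset_univ]

lemma trace_single (γ : ℝ) (hγ0 : 0 ≤ γ) (hγ1 : γ ≤ 1) (i : Fin 2) :
    ((ρbit i) * ADC γ (ρbit i)).trace = (((1 + Real.sqrt (1 - γ)) / 2 : ℝ) : ℂ) := by
  have h1 : (Real.sqrt (1 - γ) : ℂ) * (Real.sqrt (1 - γ) : ℂ) = 1 - (γ : ℂ) := by
    rw [← Complex.ofReal_mul, Real.mul_self_sqrt (by linarith)]; push_cast; ring
  have h2 : (Real.sqrt γ : ℂ) * (Real.sqrt γ : ℂ) = (γ : ℂ) := by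
    rw [← Complex.ofReal_mul, Real.mul_self_sqrt hγ0]
  fin_cases i <;>
    simp [ρbit, ADC, K₀, K₁, ρPlus, ρMinus, Matrix.trace_fin_two, Matrix.mul_apply,
      Fin.sum_univ_two, Matrix.conjTranspose_apply, Matrix.vecMul, dotProduct] <;>
    push_cast <;> linear_combination (1/4 : ℂ) * h1 + (1/4 : ℂ) * h2

lemma trace_prod (γ : ℝ) (n : ℕ) (x : Fin n → Fin 2) :
    (Pind n x * σout γ n x).trace
      = ∏ j, ((ρbit (x j)) * ADC γ (ρbit (x j))).trace := by
  have key : ∀ j : Fin n, ((ρbit (x j)) * ADC γ (ρbit (x j))).trace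
      = ∑ a : Fin 2, ∑ b : Fin 2, (ρbit (x j)) a b * (ADC γ (ρbit (x j))) b a := by
    intro j
    simp [Matrix.trace, Matrix.diag, Matrix.mul_apply]
  calc (Pind n x * σout γ n x).trace
      = ∑ u : Fin n → Fin 2, ∑ v : Fin n → Fin 2,
          ∏ j, ((ρbit (x j)) (u j) (v j) * (ADC γ (ρbit (x j))) (v j) (u j)) := by
        simp [Matrix.trace, Matrix.diag, Matrix.mul_apply, Pind, σout,
          Finset.prod_mul_distrib]
    _ = ∑ u : Fin n → Fin 2, ∏ j, ∑ b : Fin 2,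
          ((ρbit (x j)) (u j) b * (ADC γ (ρbit (x j))) b (u j)) := by
        refine Finset.sum_congr rfl fun u _ => ?_
        exact sum_prod_pi (fun j b => (ρbit (x j)) (u j) b * (ADC γ (ρbit (x j))) b (u j))
    _ = ∏ j, ∑ a : Fin 2, ∑ b : Fin 2,
          ((ρbit (x j)) a b * (ADC γ (ρbit (x j))) b a) := by
        exact sum_prod_pi (fun j a => ∑ b : Fin 2, (ρbit (x j)) a b * (ADC γ (ρbit (x j))) b a)
    _ = _ := by
        refine Finset.prod_congr rfl fun j _ => ?_
        rw [key]

theorem stmt11 (γ : ℝ) (hγ0 : 0 ≤ γ) (hγ1 : γ ≤ 1) (n : ℕ) (hn : 1 ≤ n) :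
    (∀ x : Fin n → Fin 2, (Pind n x).PosSemidef) ∧
    (∑ x : Fin n → Fin 2, Pind n x = 1) ∧
    ((2 : ℝ) ^ n)⁻¹ * ∑ x : Fin n → Fin 2, (Pind n x * σout γ n x).trace.re
      = ((1 + Real.sqrt (1 - γ)) / 2) ^ n := by
  refine ⟨?_, ?_, ?_⟩
  · -- PSD
    intro x
    set w : (Fin n → Fin 2) → ℂ := fun u => ∏ j, cvec (x j) (u j) with hw
    have hwr : ∀ u, starRingEnd ℂ (w u) = w u := by
      intro u
      simp only [hw, map_prod, cvec_real]
    have hfac : ∀ u v, Pind n x u v = w u * starRingEnd ℂ (w v) := by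
      intro u v
      rw [hwr]
      simp only [Pind, Matrix.of_apply, hw, ← Finset.prod_mul_distrib]
      exact Finset.prod_congr rfl fun j _ => ρbit_factor _ _ _
    rw [Matrix.posSemidef_iff_dotProduct_mulVec]
    constructor
    · show (Pind n x)ᴴ = Pind n x
      ext u v
      rw [Matrix.conjTranspose_apply, hfac, hfac]
      simp only [star_mul', RCLike.star_def, _root_.map_mul, Complex.conj_conj, hwr]
      ring
    · intro y
      set s : ℂ := ∑ v, starRingEnd ℂ (w v) * y v with hs
      have : dotProduct (star y) ((Pind n x) *ᵥ y) = starRingEnd ℂ s * s := by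
        have h1 : dotProduct (star y) ((Pind n x) *ᵥ y)
            = ∑ u, ∑ v, (starRingEnd ℂ (y u) * w u) * (starRingEnd ℂ (w v) * y v) := by
          simp only [dotProduct, Matrix.mulVec, dotProduct, hfac,
            Pi.star_apply, RCLike.star_def, Finset.mul_sum]
          refine Finset.sum_congr rfl fun u _ => Finset.sum_congr rfl fun v _ => ?_
          ring
        have h2 : starRingEnd ℂ s = ∑ u, starRingEnd ℂ (y u) * w u := by
          rw [hs, map_sum]
          refine Finset.sum_congr rfl fun u _ => ?_
          rw [_root_.map_mul, Complex.conj_conj]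
          ring
        rw [h1, h2, Finset.sum_mul_sum]
      rw [this]
      exact star_mul_self_nonneg s
  · -- sum to identity
    ext u v
    rw [Matrix.sum_apply]
    have : ∑ x : Fin n → Fin 2, Pind n x u v
        = ∏ j, ∑ i : Fin 2, (ρbit i) (u j) (v j) := by
      rw [← sum_prod_pi (fun j i => (ρbit i) (u j) (v j))]
      rfl
    rw [this]
    have hone : ∀ a b : Fin 2, ∑ i : Fin 2, (ρbit i) a b = if a = b then 1 else 0 := by
      intro a b
      fin_cases a <;> fin_cases b <;> simp [Fin.sum_univ_two, ρbit, ρPlus, ρMinus] <;> norm_num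
    simp only [hone]
    by_cases h : u = v
    · subst h; simp [Matrix.one_apply]
    · rw [Matrix.one_apply_ne h]
      obtain ⟨j, hj⟩ := Function.ne_iff.mp h
      exact Finset.prod_eq_zero (Finset.mem_univ j) (by simp [hj])
  · -- success probability
    have htr : ∀ x : Fin n → Fin 2, (Pind n x * σout γ n x).trace
        = ((((1 + Real.sqrt (1 - γ)) / 2) ^ n : ℝ) : ℂ) := by
      intro x
      rw [trace_prod]
      simp only [trace_single γ hγ0 hγ1]
      rw [Finset.prod_const, Complex.ofReal_pow]
      simp
    have hre : ∀ x : Fin n → Fin 2, (Pind n x * σout γ n x).trace.re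
        = ((1 + Real.sqrt (1 - γ)) / 2) ^ n := by
      intro x; rw [htr x]; exact Complex.ofReal_re _
    have hc : Fintype.card (Fin n → Fin 2) = 2 ^ n := by simp
    simp only [hre]
    rw [Finset.sum_const, Finset.card_univ, hc, nsmul_eq_mul]
    push_cast
    rw [← mul_assoc, inv_mul_cancel₀ (by positivity), one_mul]
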